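/- arXiv:2404.08862 — 3 statements merged into one kernel-verified Lean document; each statement's English description precedes it below -/
import Mathlib

section
/- Treating a and ā as independent variables, the identity (a/2)·conj(∂p₂/∂ā) − D·(∂p₃/∂a) + ∂p₄/∂a = −(1/2)·p̄₂ + ā·p₃ holds, where D = aā + (ρ/2)(−2+3sin²α), p₂ = (2a(ā−b)+(3/2)ρsin²α)cotα/(ā+b), p₃ = ((a−b)/(a+b))cotα, p₄ = D(p₃−p̄₃) + (1/2)(āp₂ − ap̄₂) + (3/2)ρ sinα cosα, and conj swaps a and ā. -/
set_option maxHeartbeats 1000000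

open ComplexConjugate

/-- With `a` and `ā` treated as independent complex variables `z`, `w`:
`(a/2)·conj(∂p₂/∂ā) − D·∂p₃/∂a + ∂p₄/∂a = −(1/2)p̄₂ + ā·p₃`.
The conjugate of a rational expression in `(a, ā)` with real coefficients swaps `a ↔ ā`. -/
theorem stmt13 (ρ b α : ℝ) (hb : 0 < b) (hsin : Real.sin α ≠ 0)
    (cot : ℂ) (hcot : cot = ((Real.cos α / Real.sin α : ℝ) : ℂ))
    (D p₂ p₃ p₄ : ℂ → ℂ → ℂ)
    (hD : ∀ z w, D z w = z * w + ((ρ : ℂ) / 2) * (-2 + 3 * (Real.sin α : ℂ) ^ 2))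
    (hp₂ : ∀ z w, p₂ z w = (2 * z * (w - (b : ℂ)) + (3 / 2 : ℂ) * (ρ : ℂ) * (Real.sin α : ℂ) ^ 2) *
      cot / (w + (b : ℂ)))
    (hp₃ : ∀ z w, p₃ z w = ((z - (b : ℂ)) / (z + (b : ℂ))) * cot)
    (hp₄ : ∀ z w, p₄ z w = D z w * (p₃ z w - p₃ w z) +
      (1 / 2 : ℂ) * (w * p₂ z w - z * p₂ w z) +
      (3 / 2 : ℂ) * (ρ : ℂ) * (Real.sin α : ℂ) * (Real.cos α : ℂ))
    (z w : ℂ) (hz : z + (b : ℂ) ≠ 0) (hw : w + (b : ℂ) ≠ 0) :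
    -- `conj (∂p₂/∂ā)` evaluated at `(z, w)` is `∂p₂/∂ā` with arguments swapped, i.e.
    -- `deriv (fun t => p₂ w t) z`.
    (z / 2) * deriv (fun t => p₂ w t) z - D z w * deriv (fun t => p₃ t w) z +
      deriv (fun t => p₄ t w) z = -(1 / 2 : ℂ) * p₂ w z + w * p₃ z w := by
  set c : ℂ := (3 / 2 : ℂ) * (ρ : ℂ) * (Real.sin α : ℂ) ^ 2 with hc
  set k : ℂ := ((ρ : ℂ) / 2) * (-2 + 3 * (Real.sin α : ℂ) ^ 2) with hk
  -- derivative of t ↦ p₂ w t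
  have h2 : HasDerivAt (fun t : ℂ => (2 * w * (t - (b : ℂ)) + c) * cot / (t + (b : ℂ)))
      ((2 * w * cot * (z + b) - (2 * w * (z - b) + c) * cot) / (z + b) ^ 2) z := by
    have H := ((((((hasDerivAt_id z).sub_const (b : ℂ)).const_mul (2 * w)).add_const c).mul_const
      cot).div ((hasDerivAt_id z).add_const (b : ℂ)) hz)
    refine H.congr_deriv ?_
    simp
  -- derivative of t ↦ p₃ t w
  have h3 : HasDerivAt (fun t : ℂ => ((t - (b : ℂ)) / (t + (b : ℂ))) * cot)
      (2 * b * cot / (z + b) ^ 2) z := by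
    have H := ((((hasDerivAt_id z).sub_const (b : ℂ)).div ((hasDerivAt_id z).add_const (b : ℂ))
      hz).mul_const cot)
    refine H.congr_deriv ?_
    simp only [id_eq, one_mul, mul_one]
    rw [div_mul_eq_mul_div]
    congr 1
    ring
  -- derivative of t ↦ p₂ t w (linear in t)
  have h2' : HasDerivAt (fun t : ℂ => (2 * t * (w - (b : ℂ)) + c) * cot / (w + (b : ℂ)))
      (2 * (w - b) * cot / (w + b)) z := by
    have H := (((((hasDerivAt_id z).const_mul (2 : ℂ)).mul_const (w - (b : ℂ))).add_const
      c).mul_const cot).div_const (w + (b : ℂ))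
    refine H.congr_deriv ?_
    ring
  -- derivative of t ↦ D t w  (linear)
  have hDd : HasDerivAt (fun t : ℂ => t * w + k) w z := by
    have H := ((hasDerivAt_id z).mul_const w).add_const k
    refine H.congr_deriv ?_
    ring
  -- derivative of t ↦ p₄ t w
  have h4 : HasDerivAt (fun t : ℂ =>
      (t * w + k) * (((t - (b : ℂ)) / (t + (b : ℂ))) * cot - ((w - (b : ℂ)) / (w + (b : ℂ))) * cot)
      + (1 / 2 : ℂ) * (w * ((2 * t * (w - (b : ℂ)) + c) * cot / (w + (b : ℂ)))
          - t * ((2 * w * (t - (b : ℂ)) + c) * cot / (t + (b : ℂ))))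
      + (3 / 2 : ℂ) * (ρ : ℂ) * (Real.sin α : ℂ) * (Real.cos α : ℂ))
      (w * (((z - b) / (z + b)) * cot - ((w - b) / (w + b)) * cot)
        + (z * w + k) * (2 * b * cot / (z + b) ^ 2)
        + (1 / 2 : ℂ) * (w * (2 * (w - b) * cot / (w + b))
          - (1 * ((2 * w * (z - b) + c) * cot / (z + b))
            + z * ((2 * w * cot * (z + b) - (2 * w * (z - b) + c) * cot) / (z + b) ^ 2)))) z := by
    have Hsub := h3.sub_const (((w - (b : ℂ)) / (w + (b : ℂ))) * cot)
    have H1 := hDd.mul Hsub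
    have H2 := ((h2'.const_mul w).sub ((hasDerivAt_id z).mul h2)).const_mul (1 / 2 : ℂ)
    exact (H1.add H2).add_const ((3 / 2 : ℂ) * (ρ : ℂ) * (Real.sin α : ℂ) * (Real.cos α : ℂ))
  have e2 : (fun t => p₂ w t) = fun t : ℂ => (2 * w * (t - (b : ℂ)) + c) * cot / (t + (b : ℂ)) :=
    funext fun t => hp₂ w t
  have e3 : (fun t => p₃ t w) = fun t : ℂ => ((t - (b : ℂ)) / (t + (b : ℂ))) * cot :=
    funext fun t => hp₃ t w
  have e4 : (fun t => p₄ t w) = fun t : ℂ =>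
      (t * w + k) * (((t - (b : ℂ)) / (t + (b : ℂ))) * cot - ((w - (b : ℂ)) / (w + (b : ℂ))) * cot)
      + (1 / 2 : ℂ) * (w * ((2 * t * (w - (b : ℂ)) + c) * cot / (w + (b : ℂ)))
          - t * ((2 * w * (t - (b : ℂ)) + c) * cot / (t + (b : ℂ))))
      + (3 / 2 : ℂ) * (ρ : ℂ) * (Real.sin α : ℂ) * (Real.cos α : ℂ) := by
    funext t
    rw [hp₄, hD, hp₃, hp₃, hp₂, hp₂]
  rw [e2, e3, e4, h2.deriv, h3.deriv, h4.deriv, hD, hp₂, hp₃]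
  ring
end

section
/- Combining the previous identity with the paper's computation: (a/2)·conj(∂p₂/∂ā) − D·(∂p₃/∂a) + ∂p₄/∂a = −3ρ sin α cos α/(4(a+b)), with all notation as in the paper (D = aā + (ρ/2)(−2+3sin²α), etc.). -/
open ComplexConjugate

set_option maxHeartbeats 1600000

lemma aux_stmt14 (z w B c r k : ℂ) (hz : z + B ≠ 0) :
    z / 2 * ((4 * w * B - c) * k / (z + B) ^ 2) - (z * w + r) * (2 * B * k / (z + B) ^ 2) +
      (4 * r - c) * B * k / (2 * (z + B) ^ 2) = -(2 * c * k) / (4 * (z + B)) := by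
  obtain ⟨t, ht, hne⟩ : ∃ t, z + B = t ∧ t ≠ 0 := ⟨z + B, rfl, hz⟩
  rw [ht]
  have hu : t * t⁻¹ = 1 := mul_inv_cancel₀ hne
  linear_combination (-(c * k * t⁻¹ ^ 2) / 2) * ht + (-(c * k * t⁻¹) / 2) * hu

/-- With `a` and `ā` treated as independent complex variables `z`, `w`:
`(a/2)·conj(∂p₂/∂ā) − D·∂p₃/∂a + ∂p₄/∂a = −(1/2)p̄₂ + ā·p₃`.
The conjugate of a rational expression in `(a, ā)` with real coefficients swaps `a ↔ ā`. -/
theorem stmt14 (ρ b α : ℝ) (hb : 0 < b) (hsin : Real.sin α ≠ 0)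
    (cot : ℂ) (hcot : cot = ((Real.cos α / Real.sin α : ℝ) : ℂ))
    (D p₂ p₃ p₄ : ℂ → ℂ → ℂ)
    (hD : ∀ z w, D z w = z * w + ((ρ : ℂ) / 2) * (-2 + 3 * (Real.sin α : ℂ) ^ 2))
    (hp₂ : ∀ z w, p₂ z w = (2 * z * (w - (b : ℂ)) + (3 / 2 : ℂ) * (ρ : ℂ) * (Real.sin α : ℂ) ^ 2) *
      cot / (w + (b : ℂ)))
    (hp₃ : ∀ z w, p₃ z w = ((z - (b : ℂ)) / (z + (b : ℂ))) * cot)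
    (hp₄ : ∀ z w, p₄ z w = D z w * (p₃ z w - p₃ w z) +
      (1 / 2 : ℂ) * (w * p₂ z w - z * p₂ w z) +
      (3 / 2 : ℂ) * (ρ : ℂ) * (Real.sin α : ℂ) * (Real.cos α : ℂ))
    (z w : ℂ) (hz : z + (b : ℂ) ≠ 0) (hw : w + (b : ℂ) ≠ 0) :
    -- `conj (∂p₂/∂ā)` evaluated at `(z, w)` is `∂p₂/∂ā` with arguments swapped, i.e.
    -- `deriv (fun t => p₂ w t) z`.
    (z / 2) * deriv (fun t => p₂ w t) z - D z w * deriv (fun t => p₃ t w) z +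
      deriv (fun t => p₄ t w) z = -(3 * (ρ : ℂ) * (Real.sin α : ℂ) * (Real.cos α : ℂ)) / (4 * (z + (b : ℂ))) := by
  set s : ℂ := (Real.sin α : ℂ) with hs
  set co : ℂ := (Real.cos α : ℂ) with hco
  set B : ℂ := (b : ℂ) with hB
  set c : ℂ := (3 / 2 : ℂ) * (ρ : ℂ) * s ^ 2 with hc
  set r : ℂ := ((ρ : ℂ) / 2) * (-2 + 3 * s ^ 2) with hr
  have hcs : co = cot * s := by
    rw [hcot, hco, hs, Complex.ofReal_div,
      div_mul_cancel₀ _ (Complex.ofReal_ne_zero.mpr hsin)]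
  -- derivative of fun t => p₂ w t
  have h2 : HasDerivAt (fun t : ℂ => (2 * w * (t - B) + c) * cot / (t + B))
      (((2 * w * 1) * cot * (z + B) - (2 * w * (z - B) + c) * cot * 1) / (z + B) ^ 2) z := by
    exact ((((((hasDerivAt_id z).sub_const B).const_mul (2 * w)).add_const c).mul_const cot).div
      ((hasDerivAt_id z).add_const B) hz)
  -- derivative of fun t => p₃ t w
  have h3 : HasDerivAt (fun t : ℂ => (t - B) / (t + B) * cot)
      ((1 * (z + B) - (z - B) * 1) / (z + B) ^ 2 * cot) z := by
    exact (((hasDerivAt_id z).sub_const B).div ((hasDerivAt_id z).add_const B) hz).mul_const cot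
  -- derivative of fun t => p₄ t w
  have hDf : HasDerivAt (fun t : ℂ => t * w + r) (1 * w) z :=
    ((hasDerivAt_id z).mul_const w).add_const r
  have hq : HasDerivAt (fun t : ℂ => (t - B) / (t + B) * cot - (w - B) / (w + B) * cot)
      ((1 * (z + B) - (z - B) * 1) / (z + B) ^ 2 * cot) z :=
    h3.sub_const _
  have hterm1 : HasDerivAt
      (fun t : ℂ => (t * w + r) * ((t - B) / (t + B) * cot - (w - B) / (w + B) * cot))
      ((1 * w) * ((z - B) / (z + B) * cot - (w - B) / (w + B) * cot) +
        (z * w + r) * ((1 * (z + B) - (z - B) * 1) / (z + B) ^ 2 * cot)) z :=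
    hDf.mul hq
  have ha : HasDerivAt (fun t : ℂ => w * ((2 * t * (w - B) + c) * cot / (w + B)))
      (w * ((2 * 1 * (w - B)) * cot / (w + B))) z := by
    exact (((((hasDerivAt_id z).const_mul 2).mul_const (w - B)).add_const c).mul_const
      cot).div_const (w + B) |>.const_mul w
  have hbb : HasDerivAt (fun t : ℂ => t * ((2 * w * (t - B) + c) * cot / (t + B)))
      (1 * ((2 * w * (z - B) + c) * cot / (z + B)) +
        z * (((2 * w * 1) * cot * (z + B) - (2 * w * (z - B) + c) * cot * 1) / (z + B) ^ 2)) z :=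
    (hasDerivAt_id z).mul h2
  have hterm2 : HasDerivAt
      (fun t : ℂ => (1 / 2 : ℂ) * (w * ((2 * t * (w - B) + c) * cot / (w + B)) -
        t * ((2 * w * (t - B) + c) * cot / (t + B))))
      ((1 / 2 : ℂ) * (w * ((2 * 1 * (w - B)) * cot / (w + B)) -
        (1 * ((2 * w * (z - B) + c) * cot / (z + B)) +
          z * (((2 * w * 1) * cot * (z + B) - (2 * w * (z - B) + c) * cot * 1) / (z + B) ^ 2)))) z :=
    (ha.sub hbb).const_mul (1 / 2 : ℂ)
  have h4 : HasDerivAt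
      (fun t : ℂ => (t * w + r) * ((t - B) / (t + B) * cot - (w - B) / (w + B) * cot) +
        (1 / 2 : ℂ) * (w * ((2 * t * (w - B) + c) * cot / (w + B)) -
          t * ((2 * w * (t - B) + c) * cot / (t + B))) +
        (3 / 2 : ℂ) * (ρ : ℂ) * s * co)
      ((1 * w) * ((z - B) / (z + B) * cot - (w - B) / (w + B) * cot) +
        (z * w + r) * ((1 * (z + B) - (z - B) * 1) / (z + B) ^ 2 * cot) +
        (1 / 2 : ℂ) * (w * ((2 * 1 * (w - B)) * cot / (w + B)) -
          (1 * ((2 * w * (z - B) + c) * cot / (z + B)) +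
            z * (((2 * w * 1) * cot * (z + B) - (2 * w * (z - B) + c) * cot * 1) / (z + B) ^ 2)))) z :=
    (hterm1.add hterm2).add_const _
  have e2 : deriv (fun t => p₂ w t) z =
      ((2 * w * 1) * cot * (z + B) - (2 * w * (z - B) + c) * cot * 1) / (z + B) ^ 2 := by
    have : (fun t => p₂ w t) = fun t : ℂ => (2 * w * (t - B) + c) * cot / (t + B) := by
      funext t; rw [hp₂]
    rw [this]; exact h2.deriv
  have e3 : deriv (fun t => p₃ t w) z =
      (1 * (z + B) - (z - B) * 1) / (z + B) ^ 2 * cot := by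
    have : (fun t => p₃ t w) = fun t : ℂ => (t - B) / (t + B) * cot := by
      funext t; rw [hp₃]
    rw [this]; exact h3.deriv
  have e4 : deriv (fun t => p₄ t w) z =
      (1 * w) * ((z - B) / (z + B) * cot - (w - B) / (w + B) * cot) +
        (z * w + r) * ((1 * (z + B) - (z - B) * 1) / (z + B) ^ 2 * cot) +
        (1 / 2 : ℂ) * (w * ((2 * 1 * (w - B)) * cot / (w + B)) -
          (1 * ((2 * w * (z - B) + c) * cot / (z + B)) +
            z * (((2 * w * 1) * cot * (z + B) - (2 * w * (z - B) + c) * cot * 1) / (z + B) ^ 2))) := by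
    have : (fun t => p₄ t w) =
        fun t : ℂ => (t * w + r) * ((t - B) / (t + B) * cot - (w - B) / (w + B) * cot) +
          (1 / 2 : ℂ) * (w * ((2 * t * (w - B) + c) * cot / (w + B)) -
            t * ((2 * w * (t - B) + c) * cot / (t + B))) +
          (3 / 2 : ℂ) * (ρ : ℂ) * s * co := by
      funext t; rw [hp₄, hD, hp₃, hp₃, hp₂, hp₂]
    rw [this]; exact h4.deriv
  have hz2 : (z + B) ^ 2 ≠ 0 := pow_ne_zero 2 hz
  have e2' : deriv (fun t => p₂ w t) z = (4 * w * B - c) * cot / (z + B) ^ 2 := by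
    rw [e2, div_eq_div_iff hz2 hz2]; ring
  have e3' : deriv (fun t => p₃ t w) z = 2 * B * cot / (z + B) ^ 2 := by
    rw [e3, div_mul_eq_mul_div, div_eq_div_iff hz2 hz2]; ring
  have e4' : deriv (fun t => p₄ t w) z = (4 * r - c) * B * cot / (2 * (z + B) ^ 2) := by
    rw [e4]
    obtain ⟨t, ht, htne⟩ : ∃ t, z + B = t ∧ t ≠ 0 := ⟨_, rfl, hz⟩
    obtain ⟨v, hv, hvne⟩ : ∃ v, w + B = v ∧ v ≠ 0 := ⟨_, rfl, hw⟩
    rw [ht, hv]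
    field_simp [htne, hvne]
    rw [← ht, ← hv]
    ring
  rw [e2', e3', e4', hD]
  refine (aux_stmt14 z w B c r cot hz).trans ?_
  rw [hcs, hc]
  ring
end

section
/- Let F(α,a,ā) = p₁p₂ − p₁p̄₇ + 2p̄₃p̄₇ + ∂p₂/∂α + (1/2)p̄₂·(∂p₂/∂ā) − ∂p̄₇/∂α − p₂·(∂p̄₇/∂a), with p₁, p₂, p₃, p₄, p₇ defined as in the paper. Then F(π/4, 0, 0) = 15ρ/(8b); in particular, if ρ ≠ 0 then F is not identically zero. -/
open ComplexConjugate

set_option maxHeartbeats 1600000 in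
/-- `F(π/4, 0, 0) = 15ρ/(8b)`; in particular, if `ρ ≠ 0` then `F` is not identically zero.
Here bars denote swapping `a ↔ ā` and `∂/∂α`, `∂/∂a`, `∂/∂ā` are partial derivatives with
`α`, `a = z`, `ā = w` treated as independent variables. -/
theorem stmt15 (ρ b : ℝ) (hρ : ρ ≠ 0) (hb : 0 < b)
    (cot : ℝ → ℂ) (hcot : ∀ α, cot α = ((Real.cos α / Real.sin α : ℝ) : ℂ))
    (D p₁ p₂ p₃ p₄ p₇ p₇b F : ℝ → ℂ → ℂ → ℂ)
    (hD : ∀ α z w, D α z w = z * w + ((ρ : ℂ) / 2) * (-2 + 3 * (Real.sin α : ℂ) ^ 2))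
    (hp₁ : ∀ α z w, p₁ α z w = ((z - (b : ℂ)) * (w - (b : ℂ)) +
      (3 / 2 : ℂ) * (ρ : ℂ) * (Real.sin α : ℂ) ^ 2) * cot α / ((z + (b : ℂ)) * (w + (b : ℂ))))
    (hp₂ : ∀ α z w, p₂ α z w = (2 * z * (w - (b : ℂ)) +
      (3 / 2 : ℂ) * (ρ : ℂ) * (Real.sin α : ℂ) ^ 2) * cot α / (w + (b : ℂ)))
    (hp₃ : ∀ α z w, p₃ α z w = ((z - (b : ℂ)) / (z + (b : ℂ))) * cot α)
    (hp₄ : ∀ α z w, p₄ α z w = D α z w * (p₃ α z w - p₃ α w z) +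
      (1 / 2 : ℂ) * (w * p₂ α z w - z * p₂ α w z) +
      (3 / 2 : ℂ) * (ρ : ℂ) * (Real.sin α : ℂ) * (Real.cos α : ℂ))
    (hp₇ : ∀ α z w, p₇ α z w = (1 / (((ρ : ℂ) / 2) * (-2 + 3 * (Real.sin α : ℂ) ^ 2))) *
      (w * p₄ α z w + (3 * (ρ : ℂ) * (Real.sin α : ℂ) * (Real.cos α : ℂ) / (4 * (z + (b : ℂ)))) *
        D α z w))
    (hp₇b : ∀ α z w, p₇b α z w = p₇ α w z)
    (hF : ∀ α z w, F α z w =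
      p₁ α z w * p₂ α z w - p₁ α z w * p₇b α z w + 2 * p₃ α w z * p₇b α z w +
      deriv (fun t => p₂ t z w) α +
      (1 / 2 : ℂ) * p₂ α w z * deriv (fun t => p₂ α z t) w -
      deriv (fun t => p₇b t z w) α - p₂ α z w * deriv (fun t => p₇b α t w) z) :
    F (Real.pi / 4) 0 0 = 15 * (ρ : ℂ) / (8 * (b : ℂ)) ∧ ¬ (∀ α z w, F α z w = 0) := by
  have hbne : b ≠ 0 := ne_of_gt hb
  have hbc : (b : ℂ) ≠ 0 := by exact_mod_cast hbne
  have hρc : (ρ : ℂ) ≠ 0 := by exact_mod_cast hρ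
  have h0b : (0 : ℂ) + (b : ℂ) ≠ 0 := by simpa using hbc
  -- trig values at π/4
  have hsR : Real.sin (Real.pi / 4) = Real.sqrt 2 / 2 := Real.sin_pi_div_four
  have hcR : Real.cos (Real.pi / 4) = Real.sqrt 2 / 2 := Real.cos_pi_div_four
  have hsqrt2 : Real.sqrt 2 ^ 2 = 2 := Real.sq_sqrt (by norm_num)
  have hs2R : Real.sin (Real.pi / 4) ^ 2 = 1 / 2 := by
    rw [hsR, div_pow, hsqrt2]; norm_num
  have hscR : Real.sin (Real.pi / 4) * Real.cos (Real.pi / 4) = 1 / 2 := by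
    rw [hsR, hcR, div_mul_div_comm, ← sq, hsqrt2]; norm_num
  have hs2 : ((Real.sin (Real.pi / 4) : ℝ) : ℂ) ^ 2 = 1 / 2 := by
    rw [← Complex.ofReal_pow, hs2R]; norm_num
  have hsc : ((Real.sin (Real.pi / 4) : ℝ) : ℂ) * ((Real.cos (Real.pi / 4) : ℝ) : ℂ)
      = 1 / 2 := by
    rw [← Complex.ofReal_mul, hscR]; norm_num
  have h32 : (3 / 2 : ℂ) * (ρ : ℂ) * ((Real.sin (Real.pi / 4) : ℝ) : ℂ) *
      ((Real.cos (Real.pi / 4) : ℝ) : ℂ) = 3 / 4 * (ρ : ℂ) := by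
    rw [mul_assoc, hsc]; ring
  have h3 : (3 : ℂ) * (ρ : ℂ) * ((Real.sin (Real.pi / 4) : ℝ) : ℂ) *
      ((Real.cos (Real.pi / 4) : ℝ) : ℂ) = 3 / 2 * (ρ : ℂ) := by
    rw [mul_assoc, hsc]; ring
  have hct : cot (Real.pi / 4) = 1 := by
    rw [hcot, hsR, hcR, div_self (by positivity)]; norm_num
  -- pointwise simplifications at α = π/4
  have hA : ∀ t : ℂ, p₂ (Real.pi / 4) 0 t = (3 / 4 * (ρ : ℂ)) / (t + (b : ℂ)) := fun t => by
    rw [hp₂, hct, hs2]; ring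
  have hC : ∀ w : ℂ, p₃ (Real.pi / 4) 0 w = -1 := fun w => by
    rw [hp₃, hct, mul_one, zero_sub, zero_add, neg_div, div_self hbc]
  have hE : ∀ t : ℂ, p₃ (Real.pi / 4) t 0 = (t - (b : ℂ)) / (t + (b : ℂ)) := fun t => by
    rw [hp₃, hct, mul_one]
  have hD0 : ∀ t : ℂ, D (Real.pi / 4) 0 t = -(ρ : ℂ) / 4 := fun t => by
    rw [hD, hs2]; ring
  have hP4 : ∀ t : ℂ, p₄ (Real.pi / 4) 0 t =
      (-(ρ : ℂ) / 4) * (-1 - (t - (b : ℂ)) / (t + (b : ℂ))) +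
      (1 / 2 : ℂ) * (t * ((3 / 4 * (ρ : ℂ)) / (t + (b : ℂ)))) + 3 / 4 * (ρ : ℂ) := fun t => by
    rw [hp₄, hD0, hC, hE, hA, h32]; ring
  have hP4' : ∀ t : ℂ, t + (b : ℂ) ≠ 0 → p₄ (Real.pi / 4) 0 t =
      (7 / 8 * (ρ : ℂ) * t) / (t + (b : ℂ)) + 3 / 4 * (ρ : ℂ) := by
    intro t ht
    rw [hP4]
    have hu : (t + (b : ℂ)) * (t + (b : ℂ))⁻¹ = 1 := mul_inv_cancel₀ ht
    linear_combination (-((ρ : ℂ) / 4)) * hu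
  have hP7 : ∀ t : ℂ, t + (b : ℂ) ≠ 0 → p₇ (Real.pi / 4) 0 t =
      -(7 / 2 : ℂ) * t ^ 2 / (t + (b : ℂ)) - 3 * t + 3 * (ρ : ℂ) / (8 * (b : ℂ)) := by
    intro t ht
    rw [hp₇, hs2, hP4' t ht, hD0, h3]
    have hX : (1 : ℂ) / ((ρ : ℂ) / 2 * (-2 + 3 * (1 / 2))) = -4 / (ρ : ℂ) := by
      field_simp
      ring
    rw [hX]
    linear_combination (-(7 / 2 : ℂ) * t ^ 2 / (t + (b : ℂ)) - 3 * t
      + 3 * (ρ : ℂ) / (8 * (b : ℂ))) * mul_inv_cancel₀ hρc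
  -- the four derivatives
  have d2 : deriv (fun t => p₂ (Real.pi / 4) 0 t) 0 = -(3 / 4 * (ρ : ℂ)) / (b : ℂ) ^ 2 := by
    have hfe : (fun t : ℂ => p₂ (Real.pi / 4) 0 t)
        = fun t : ℂ => (3 / 4 * (ρ : ℂ)) / (t + (b : ℂ)) := funext hA
    rw [hfe]
    have h1 : HasDerivAt (fun t : ℂ => t + (b : ℂ)) 1 0 := (hasDerivAt_id 0).add_const _
    have h2 := (hasDerivAt_const (0 : ℂ) ((3 : ℂ) / 4 * (ρ : ℂ))).div h1 h0b
    have h3' : HasDerivAt (fun t : ℂ => (3 / 4 * (ρ : ℂ)) / (t + (b : ℂ)))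
        (-(3 / 4 * (ρ : ℂ)) / (b : ℂ) ^ 2) 0 := by
      refine h2.congr_deriv ?_
      rw [zero_add]; ring
    exact h3'.deriv
  have d4 : deriv (fun t => p₇b (Real.pi / 4) t 0) 0 = -3 := by
    have hev : (fun t : ℂ => p₇b (Real.pi / 4) t 0) =ᶠ[nhds 0]
        (fun t : ℂ => -(7 / 2 : ℂ) * t ^ 2 / (t + (b : ℂ)) - 3 * t
          + 3 * (ρ : ℂ) / (8 * (b : ℂ))) := by
      have hcont : ContinuousAt (fun t : ℂ => t + (b : ℂ)) 0 := by fun_prop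
      filter_upwards [hcont.eventually_ne h0b] with t ht
      rw [hp₇b]; exact hP7 t ht
    rw [hev.deriv_eq]
    have h1 : HasDerivAt (fun t : ℂ => t + (b : ℂ)) 1 0 := (hasDerivAt_id 0).add_const _
    have h2 : HasDerivAt (fun t : ℂ => t ^ 2) 0 0 := by
      simpa using hasDerivAt_pow 2 (0 : ℂ)
    have h3' : HasDerivAt (fun t : ℂ => t ^ 2 / (t + (b : ℂ))) 0 0 := by
      have := h2.div h1 h0b
      refine this.congr_deriv ?_
      simp
    have hfe : (fun t : ℂ => -(7 / 2 : ℂ) * t ^ 2 / (t + (b : ℂ)) - 3 * t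
          + 3 * (ρ : ℂ) / (8 * (b : ℂ)))
        = fun t : ℂ => (-(7 / 2 : ℂ)) * (t ^ 2 / (t + (b : ℂ))) - 3 * t
          + 3 * (ρ : ℂ) / (8 * (b : ℂ)) := by
      funext t; ring
    rw [hfe]
    have h4 : HasDerivAt (fun t : ℂ => (3 : ℂ) * t) 3 0 := by
      simpa using (hasDerivAt_id (0 : ℂ)).const_mul (3 : ℂ)
    have h5 := ((h3'.const_mul (-(7 / 2 : ℂ))).sub h4).add_const (3 * (ρ : ℂ) / (8 * (b : ℂ)))
    have h6 : HasDerivAt (fun t : ℂ => (-(7 / 2 : ℂ)) * (t ^ 2 / (t + (b : ℂ))) - 3 * t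
          + 3 * (ρ : ℂ) / (8 * (b : ℂ))) (-3) 0 := by
      refine h5.congr_deriv ?_
      ring
    exact h6.deriv
  have d1 : deriv (fun t => p₂ t 0 0) (Real.pi / 4) = 0 := by
    have hev : (fun t : ℝ => p₂ t 0 0) =ᶠ[nhds (Real.pi / 4)]
        (fun t : ℝ => ((3 / 2 * ρ * (Real.sin t * Real.cos t) / b : ℝ) : ℂ)) := by
      have hs : ∀ᶠ t in nhds (Real.pi / 4), Real.sin t ≠ 0 :=
        Real.continuous_sin.continuousAt.eventually_ne (by rw [hsR]; positivity)
      filter_upwards [hs] with t ht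
      have hts : Complex.sin t ≠ 0 := by
        rw [← Complex.ofReal_sin]; exact Complex.ofReal_ne_zero.mpr ht
      rw [hp₂, hcot]
      push_cast
      linear_combination (3 / 2 * (ρ : ℂ) * Complex.sin t * Complex.cos t / (b : ℂ)) *
        mul_inv_cancel₀ hts
    rw [hev.deriv_eq]
    have hr : HasDerivAt (fun t : ℝ => 3 / 2 * ρ * (Real.sin t * Real.cos t) / b) 0
        (Real.pi / 4) := by
      have := (((Real.hasDerivAt_sin (Real.pi / 4)).mul
        (Real.hasDerivAt_cos (Real.pi / 4))).const_mul (3 / 2 * ρ)).div_const b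
      refine this.congr_deriv ?_
      rw [hsR, hcR]; ring
    simpa using hr.ofReal_comp.deriv
  have d3 : deriv (fun t => p₇b t 0 0) (Real.pi / 4) = 0 := by
    have hev : (fun t : ℝ => p₇b t 0 0) =ᶠ[nhds (Real.pi / 4)]
        (fun t : ℝ => ((3 * ρ * (Real.sin t * Real.cos t) / (4 * b) : ℝ) : ℂ)) := by
      have hcont : ContinuousAt (fun t : ℝ => -2 + 3 * Real.sin t ^ 2) (Real.pi / 4) := by
        fun_prop
      have hne : (-2 + 3 * Real.sin (Real.pi / 4) ^ 2 : ℝ) ≠ 0 := by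
        rw [hs2R]; norm_num
      filter_upwards [hcont.eventually_ne hne] with t ht
      have htc : (-2 + 3 * Complex.sin t ^ 2) ≠ 0 := by
        have h1 : ((-2 + 3 * Real.sin t ^ 2 : ℝ) : ℂ) ≠ 0 := Complex.ofReal_ne_zero.mpr ht
        have h2 : ((-2 + 3 * Real.sin t ^ 2 : ℝ) : ℂ) = -2 + 3 * Complex.sin t ^ 2 := by
          push_cast; ring
        rw [← h2]; exact h1
      have hX : ((ρ : ℂ) / 2) * (-2 + 3 * Complex.sin t ^ 2) ≠ 0 :=
        mul_ne_zero (div_ne_zero hρc two_ne_zero) htc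
      rw [hp₇b, hp₇, hD]
      push_cast
      linear_combination (3 * (ρ : ℂ) * Complex.sin t * Complex.cos t / (4 * (b : ℂ))) *
        mul_inv_cancel₀ hX
    rw [hev.deriv_eq]
    have hr : HasDerivAt (fun t : ℝ => 3 * ρ * (Real.sin t * Real.cos t) / (4 * b)) 0
        (Real.pi / 4) := by
      have := (((Real.hasDerivAt_sin (Real.pi / 4)).mul
        (Real.hasDerivAt_cos (Real.pi / 4))).const_mul (3 * ρ)).div_const (4 * b)
      refine this.congr_deriv ?_
      rw [hsR, hcR]; ring
    simpa using hr.ofReal_comp.deriv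
  -- point values
  have hp₂00 : p₂ (Real.pi / 4) 0 0 = 3 / 4 * (ρ : ℂ) / ((0 : ℂ) + (b : ℂ)) := hA 0
  have hp₁00 : p₁ (Real.pi / 4) 0 0 = ((0 - (b : ℂ)) * (0 - (b : ℂ)) + 3 / 4 * (ρ : ℂ)) /
      (((0 : ℂ) + (b : ℂ)) * ((0 : ℂ) + (b : ℂ))) := by
    rw [hp₁, hct, hs2]; ring
  have hp₇00 : p₇b (Real.pi / 4) 0 0 = 3 * (ρ : ℂ) / (8 * (b : ℂ)) := by
    rw [hp₇b]
    rw [hP7 0 h0b]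
    ring
  have hp₃00 : p₃ (Real.pi / 4) 0 0 = -1 := hC 0
  have key : F (Real.pi / 4) 0 0 = 15 * (ρ : ℂ) / (8 * (b : ℂ)) := by
    rw [hF, d1, d2, d3, d4, hp₂00, hp₁00, hp₇00, hp₃00]
    linear_combination (3 / 8 * (ρ : ℂ) * ((b : ℂ))⁻¹ * ((b : ℂ) * ((b : ℂ))⁻¹ + 1)) *
      mul_inv_cancel₀ hbc
  refine ⟨key, fun h => hρc ?_⟩
  have h0 := h (Real.pi / 4) 0 0
  rw [key] at h0
  rcases div_eq_zero_iff.mp h0 with h1 | h2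
  · simpa using h1
  · exact absurd (by simpa using h2 : (b : ℂ) = 0) hbc
end
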